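/- Let d be a complex number, and let f₂ be the polynomial in three complex variables x, y, z given by f₂ = x⁴y³ + 2zx²y⁴ + z²y⁵ + (d−1)x⁵y + (2d²+4d−2)zx³y² + (2d²+3d−1)z²xy³ + (d³−d²−d)zx⁴ + (d⁴+4d³+d²)z²x²y + (d³+d²+d)z³y² + (d⁵+3d⁴+3d³+d²)z³x. Then for every real number λ > 6/11 and every open neighborhood U of the origin in ℂ³, the function (x,y,z) ↦ |f₂(x,y,z)|^{−2λ} is not integrable on U with respect to Lebesgue measure on ℂ³ ≅ ℝ⁶. -/

import Mathlib

open MeasureTheory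

section Aux
open Metric
open scoped ENNReal NNReal


noncomputable def Fpoly (d : ℂ) (p : ℂ × ℂ × ℂ) : ℂ :=
  p.1 ^ 4 * p.2.1 ^ 3 + 2 * p.2.2 * p.1 ^ 2 * p.2.1 ^ 4
    + p.2.2 ^ 2 * p.2.1 ^ 5
    + (d - 1) * p.1 ^ 5 * p.2.1
    + (2 * d ^ 2 + 4 * d - 2) * p.2.2 * p.1 ^ 3 * p.2.1 ^ 2
    + (2 * d ^ 2 + 3 * d - 1) * p.2.2 ^ 2 * p.1 * p.2.1 ^ 3
    + (d ^ 3 - d ^ 2 - d) * p.2.2 * p.1 ^ 4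
    + (d ^ 4 + 4 * d ^ 3 + d ^ 2) * p.2.2 ^ 2 * p.1 ^ 2 * p.2.1
    + (d ^ 3 + d ^ 2 + d) * p.2.2 ^ 3 * p.2.1 ^ 2
    + (d ^ 5 + 3 * d ^ 4 + 3 * d ^ 3 + d ^ 2) * p.2.2 ^ 3 * p.1

lemma Fpoly_homog (d : ℂ) (T : ℂ) (a : ℂ × ℂ × ℂ) :
    Fpoly d (T ^ 2 * a.1, T * a.2.1, T ^ 3 * a.2.2) = T ^ 11 * Fpoly d a := by
  simp only [Fpoly]; ring

lemma Fpoly_continuous (d : ℂ) : Continuous (Fpoly d) := by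
  unfold Fpoly; fun_prop

lemma Fpoly_ne_zero (d : ℂ) :
    Fpoly d (if d = 0 then (2:ℂ) else 1, 1, 0) ≠ 0 := by
  by_cases hd : d = 0
  · subst hd; simp only [Fpoly, if_pos rfl]; norm_num
  · rw [if_neg hd]; simp only [Fpoly]; ring_nf
    simpa using hd

lemma scale_ineq {tau M lam : ℝ} (ht0 : 0 < tau) (ht1 : tau ≤ 1) (hM : 0 < M)
    (hlam : 6 / 11 < lam) : M ^ (-2 * lam) ≤ (tau ^ 11 * M) ^ (-2 * lam) * tau ^ 12 := by
  have h2 : (tau ^ 11 * M) ^ (-2 * lam) = (tau ^ 11) ^ (-2 * lam) * M ^ (-2 * lam) :=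
    Real.mul_rpow (by positivity) hM.le
  have h3 : (tau ^ 11 : ℝ) ^ (-2 * lam) = tau ^ ((11 : ℝ) * (-2 * lam)) := by
    rw [← Real.rpow_natCast tau 11, ← Real.rpow_mul ht0.le]
    norm_num
  have h4 : (tau : ℝ) ^ (12 : ℕ) = tau ^ ((12 : ℝ)) := by
    rw [← Real.rpow_natCast tau 12]; norm_num
  have h5 : tau ^ ((11 : ℝ) * (-2 * lam)) * tau ^ ((12 : ℝ))
      = tau ^ ((11 : ℝ) * (-2 * lam) + 12) := (Real.rpow_add ht0 _ _).symm
  have h6 : (1 : ℝ) ≤ tau ^ ((11 : ℝ) * (-2 * lam) + 12) :=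
    Real.one_le_rpow_of_pos_of_le_one_of_nonpos ht0 ht1 (by nlinarith)
  calc M ^ (-2 * lam) = 1 * M ^ (-2 * lam) := (one_mul _).symm
    _ ≤ tau ^ ((11 : ℝ) * (-2 * lam) + 12) * M ^ (-2 * lam) :=
        mul_le_mul_of_nonneg_right h6 (Real.rpow_nonneg hM.le _)
    _ = (tau ^ 11 * M) ^ (-2 * lam) * tau ^ 12 := by
        rw [h2, h3, ← h5, ← h4]; ring

set_option maxHeartbeats 1000000 in
theorem main (d : ℂ) (lam : ℝ) (hlam : 6 / 11 < lam)
    (U : Set (ℂ × ℂ × ℂ)) (hU : IsOpen U) (h0 : ((0 : ℂ), (0 : ℂ), (0 : ℂ)) ∈ U) :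
    ¬ IntegrableOn (fun p : ℂ × ℂ × ℂ =>
        ‖Fpoly d p‖ ^ (-2 * lam)) U volume := by
  intro hInt
  have hlam0 : (0:ℝ) < lam := lt_trans (by norm_num) hlam
  have hexp : -2 * lam ≤ 0 := by linarith
  -- base point
  set x₀ : ℂ := if d = 0 then (2:ℂ) else 1 with hx₀
  set q : ℂ × ℂ × ℂ := (x₀, 1, 0) with hqdef
  have hq : Fpoly d q ≠ 0 := Fpoly_ne_zero d
  set m : ℝ := ‖Fpoly d q‖ with hmdef
  have hm0 : 0 < m := by
    rw [hmdef]; exact norm_pos_iff.2 hq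
  have hx₀abs : ‖x₀‖ ≤ 2 := by
    rw [hx₀]; split_ifs <;> simp
  -- radius around q where |F| ∈ [m/2, 2m]
  obtain ⟨δ, hδ0, hδ⟩ : ∃ δ > 0, ∀ p, dist p q < δ →
      |‖Fpoly d p‖ - m| < m / 2 := by
    have hc : ContinuousAt (fun p => ‖Fpoly d p‖) q :=
      (continuous_norm.comp (Fpoly_continuous d)).continuousAt
    have := Metric.continuousAt_iff.1 hc (m/2) (by linarith)
    obtain ⟨δ, hδ0, h⟩ := this
    exact ⟨δ, hδ0, fun p hp => by simpa [Real.dist_eq] using h hp⟩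
  set r : ℝ := min (δ/2) (4⁻¹) with hrdef
  have hr0 : 0 < r := lt_min (by linarith) (by norm_num)
  have hr4 : r ≤ 4⁻¹ := min_le_right _ _
  have hFA : ∀ p ∈ closedBall q r,
      m/2 ≤ ‖Fpoly d p‖ ∧ ‖Fpoly d p‖ ≤ 2*m := by
    intro p hp
    have : dist p q < δ := lt_of_le_of_lt (mem_closedBall.1 hp)
      (lt_of_le_of_lt (min_le_left _ _) (by linarith))
    have h := abs_lt.1 (hδ p this)
    constructor <;> linarith [h.1, h.2]
  -- ball inside U
  obtain ⟨ε, hε0, hεU⟩ := Metric.isOpen_iff.1 hU _ h0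
  -- scaling factors
  set c : ℝ := min 2⁻¹ (ε/4) with hcdef
  have hc0 : 0 < c := lt_min (by norm_num) (by linarith)
  have hc1 : c ≤ 2⁻¹ := min_le_left _ _
  have hcε : c ≤ ε/4 := min_le_right _ _
  set t : ℕ → ℝ := fun n => c * (2⁻¹:ℝ)^n with htdef
  have ht0 : ∀ n, 0 < t n := fun n => by positivity
  have ht1 : ∀ n, t n ≤ 1 := fun n => by
    have : (2⁻¹:ℝ)^n ≤ 1 := pow_le_one₀ (by norm_num) (by norm_num)
    calc t n ≤ c * 1 := by
            exact mul_le_mul_of_nonneg_left this hc0.le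
      _ ≤ 1 := by rw [mul_one]; exact hc1.trans (by norm_num)
  have htc : ∀ n, t n ≤ c := fun n => by
    have : (2⁻¹:ℝ)^n ≤ 1 := pow_le_one₀ (by norm_num) (by norm_num)
    calc t n ≤ c * 1 := mul_le_mul_of_nonneg_left this hc0.le
      _ = c := mul_one c
  have htmono : ∀ i j : ℕ, i < j → t j ≤ t i / 2 := by
    intro i j hij
    rw [htdef]
    simp only
    rw [div_eq_mul_inv, mul_assoc]
    refine mul_le_mul_of_nonneg_left ?_ hc0.le
    calc (2⁻¹:ℝ)^j ≤ (2⁻¹:ℝ)^(i+1) :=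
          pow_le_pow_of_le_one (by norm_num) (by norm_num) hij
      _ = (2⁻¹:ℝ)^i * 2⁻¹ := pow_succ _ _
  -- the annular sets
  set S : ℕ → Set (ℂ × ℂ × ℂ) := fun n =>
    closedBall (((t n : ℂ))^2 * x₀) ((t n)^2 * r) ×ˢ
      (closedBall ((t n : ℂ)) ((t n) * r) ×ˢ closedBall (0:ℂ) ((t n)^3 * r)) with hSdef
  have hSmeas : ∀ n, MeasurableSet (S n) := fun n =>
    measurableSet_closedBall.prod (measurableSet_closedBall.prod measurableSet_closedBall)
  -- decomposition
  have hdecomp : ∀ n, ∀ p ∈ S n, ∃ a ∈ closedBall q r,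
      p = (((t n : ℂ))^2 * a.1, (t n : ℂ) * a.2.1, ((t n : ℂ))^3 * a.2.2) := by
    intro n p hp
    obtain ⟨hp1, hp2, hp3⟩ := hp
    set T : ℂ := (t n : ℂ) with hT
    have hTne : T ≠ 0 := by
      simp [hT, Complex.ofReal_ne_zero, (ht0 n).ne']
    have hTabs : ‖T‖ = t n := by
      rw [hT, Complex.norm_real, Real.norm_eq_abs, abs_of_pos (ht0 n)]
    refine ⟨(p.1 / T^2, p.2.1 / T, p.2.2 / T^3), ?_, ?_⟩
    · rw [mem_closedBall, hqdef]
      rw [Prod.dist_eq]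
      apply max_le
      · simp only [Complex.dist_eq]
        rw [div_sub' (pow_ne_zero 2 hTne), norm_div, norm_pow, hTabs]
        rw [div_le_iff₀ (by positivity)]
        calc ‖p.1 - T ^ 2 * x₀‖ = dist p.1 (T^2 * x₀) := by
              simp [Complex.dist_eq]
          _ ≤ (t n)^2 * r := mem_closedBall.1 hp1
          _ = r * (t n)^2 := by ring
      · rw [Prod.dist_eq]
        apply max_le
        · simp only [Complex.dist_eq]
          rw [div_sub' hTne, norm_div, hTabs]
          rw [div_le_iff₀ (ht0 n)]
          calc ‖p.2.1 - T * 1‖ = dist p.2.1 T := by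
                simp [Complex.dist_eq]
            _ ≤ (t n) * r := mem_closedBall.1 hp2
            _ = r * t n := by ring
        · simp only [Complex.dist_eq]
          rw [div_sub' (pow_ne_zero 3 hTne), norm_div, norm_pow, hTabs]
          rw [div_le_iff₀ (by positivity)]
          calc ‖p.2.2 - T ^ 3 * 0‖ = dist p.2.2 0 := by
                simp [Complex.dist_eq]
            _ ≤ (t n)^3 * r := mem_closedBall.1 hp3
            _ = r * (t n)^3 := by ring
    · simp only
      rw [mul_div_cancel₀ _ (pow_ne_zero 2 hTne), mul_div_cancel₀ _ hTne,
        mul_div_cancel₀ _ (pow_ne_zero 3 hTne)]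
  -- |F| bounds on S n
  have habsT : ∀ n, ‖(t n : ℂ)‖ = t n := fun n => by
    rw [Complex.norm_real, Real.norm_eq_abs, abs_of_pos (ht0 n)]
  have hFS : ∀ n, ∀ p ∈ S n,
      (t n) ^ 11 * (m / 2) ≤ ‖Fpoly d p‖ ∧
        ‖Fpoly d p‖ ≤ (t n) ^ 11 * (2 * m) := by
    intro n p hp
    obtain ⟨a, ha, hpa⟩ := hdecomp n p hp
    have habs : ‖Fpoly d p‖ = (t n) ^ 11 * ‖Fpoly d a‖ := by
      rw [hpa, Fpoly_homog, norm_mul, norm_pow, habsT]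
    obtain ⟨h1, h2⟩ := hFA a ha
    have h11 : (0:ℝ) < (t n) ^ 11 := pow_pos (ht0 n) _
    exact ⟨by rw [habs]; exact mul_le_mul_of_nonneg_left h1 h11.le,
      by rw [habs]; exact mul_le_mul_of_nonneg_left h2 h11.le⟩
  -- S n ⊆ U
  have hSU : ∀ n, S n ⊆ U := by
    intro n p hp
    obtain ⟨hp1, hp2, hp3⟩ := hp
    apply hεU
    rw [mem_ball]
    have ht2 : (t n) ^ 2 ≤ t n := by
      nlinarith [ht0 n, ht1 n]
    have ht3 : (t n) ^ 3 ≤ t n := by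
      nlinarith [ht0 n, ht1 n]
    have h1 : dist p.1 (0:ℂ) ≤ 3 * t n := by
      calc dist p.1 0 ≤ dist p.1 (((t n : ℂ)) ^ 2 * x₀) + dist (((t n : ℂ)) ^ 2 * x₀) 0 :=
            dist_triangle _ _ _
        _ ≤ (t n) ^ 2 * r + (t n) ^ 2 * 2 := by
            refine add_le_add (mem_closedBall.1 hp1) ?_
            rw [Complex.dist_eq, sub_zero, norm_mul, norm_pow, habsT]
            exact mul_le_mul_of_nonneg_left hx₀abs (by positivity)
        _ ≤ (t n) ^ 2 * 3 := by nlinarith [ht0 n]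
        _ ≤ 3 * t n := by nlinarith
    have h2 : dist p.2.1 (0:ℂ) ≤ 3 * t n := by
      calc dist p.2.1 0 ≤ dist p.2.1 ((t n : ℂ)) + dist ((t n : ℂ)) 0 := dist_triangle _ _ _
        _ ≤ (t n) * r + t n := by
            refine add_le_add (mem_closedBall.1 hp2) ?_
            rw [Complex.dist_eq, sub_zero, habsT]
        _ ≤ 3 * t n := by nlinarith [ht0 n]
    have h3 : dist p.2.2 (0:ℂ) ≤ 3 * t n := by
      calc dist p.2.2 0 ≤ (t n) ^ 3 * r := mem_closedBall.1 hp3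
        _ ≤ (t n) ^ 3 := by nlinarith [pow_pos (ht0 n) 3]
        _ ≤ t n := ht3
        _ ≤ 3 * t n := by nlinarith [ht0 n]
    have hd : dist p ((0:ℂ), (0:ℂ), (0:ℂ)) ≤ 3 * t n := by
      rw [Prod.dist_eq]
      apply max_le h1
      rw [Prod.dist_eq]
      exact max_le h2 h3
    calc dist p ((0:ℂ), (0:ℂ), (0:ℂ)) ≤ 3 * t n := hd
      _ ≤ 3 * c := by linarith [htc n]
      _ ≤ 3 * (ε / 4) := by linarith
      _ < ε := by linarith
  -- pairwise disjoint
  have hdisj : Pairwise (Function.onFun Disjoint S) := by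
    have key : ∀ i j, i < j → ∀ p, p ∈ S i → p ∈ S j → False := by
      intro i j hij p hpi hpj
      have hi2 := mem_closedBall.1 hpi.2.1
      have hj2 := mem_closedBall.1 hpj.2.1
      have hlow : t i - t i * r ≤ dist p.2.1 (0:ℂ) := by
        have htr : dist ((t i : ℂ)) (0:ℂ) ≤ dist ((t i : ℂ)) p.2.1 + dist p.2.1 0 :=
          dist_triangle _ _ _
        rw [Complex.dist_eq, sub_zero, habsT, dist_comm] at htr
        linarith [hi2]
      have hhigh : dist p.2.1 (0:ℂ) ≤ t j * r + t j := by
        calc dist p.2.1 0 ≤ dist p.2.1 ((t j : ℂ)) + dist ((t j : ℂ)) 0 := dist_triangle _ _ _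
          _ ≤ t j * r + t j := by
              refine add_le_add hj2 ?_
              rw [Complex.dist_eq, sub_zero, habsT]
      have hji : t j ≤ t i / 2 := htmono i j hij
      have hri : t i * r ≤ t i * 4⁻¹ := mul_le_mul_of_nonneg_left hr4 (ht0 i).le
      have hrj : t j * r ≤ t j * 4⁻¹ := mul_le_mul_of_nonneg_left hr4 (ht0 j).le
      linarith [ht0 i, ht0 j]
    intro i j hij
    rcases lt_or_gt_of_ne hij with h | h
    · rw [Function.onFun, Set.disjoint_left]
      intro p hp1 hp2
      exact key i j h p hp1 hp2
    · rw [Function.onFun, Set.disjoint_left]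
      intro p hp1 hp2
      exact key j i h p hp2 hp1
  -- volume of S n
  have hvol : ∀ n, volume (S n) = ENNReal.ofReal (Real.pi ^ 3 * r ^ 6 * (t n) ^ 12) := by
    intro n
    have hpi : ((NNReal.pi : ℝ≥0) : ℝ≥0∞) = ENNReal.ofReal Real.pi := by
      rw [← NNReal.coe_real_pi, ENNReal.ofReal_coe_nnreal]
    rw [hSdef]
    simp only
    rw [Measure.volume_eq_prod, Measure.prod_prod, Measure.volume_eq_prod, Measure.prod_prod,
      Complex.volume_closedBall, Complex.volume_closedBall, Complex.volume_closedBall, hpi,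
      ← ENNReal.ofReal_pow (by positivity), ← ENNReal.ofReal_pow (by positivity),
      ← ENNReal.ofReal_pow (by positivity),
      ← ENNReal.ofReal_mul (by positivity), ← ENNReal.ofReal_mul (by positivity),
      ← ENNReal.ofReal_mul (by positivity), ← ENNReal.ofReal_mul (by positivity),
      ← ENNReal.ofReal_mul (by positivity)]
    congr 1
    ring
  -- the constant
  set C : ℝ≥0∞ := ENNReal.ofReal ((2 * m) ^ (-2 * lam) * (Real.pi ^ 3 * r ^ 6)) with hC
  have hCne : C ≠ 0 := by
    rw [hC, ← ENNReal.ofReal_zero, Ne, ENNReal.ofReal_eq_ofReal_iff] <;>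
      positivity
  -- lower bound for each piece
  have hbound : ∀ n, C ≤ ∫⁻ p in S n, ENNReal.ofReal (‖Fpoly d p‖ ^ (-2 * lam)) := by
    intro n
    have step1 : ENNReal.ofReal (((t n) ^ 11 * (2 * m)) ^ (-2 * lam)) * volume (S n)
        ≤ ∫⁻ p in S n, ENNReal.ofReal (‖Fpoly d p‖ ^ (-2 * lam)) := by
      rw [← setLIntegral_const (S n)]
      refine setLIntegral_mono' (hSmeas n) ?_
      intro p hp
      refine ENNReal.ofReal_le_ofReal ?_
      have h1 := (hFS n p hp).1
      have h2 := (hFS n p hp).2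
      have hpos : 0 < ‖Fpoly d p‖ :=
        lt_of_lt_of_le (by positivity) h1
      exact Real.rpow_le_rpow_of_nonpos hpos h2 hexp
    refine le_trans ?_ step1
    rw [hvol n, ← ENNReal.ofReal_mul (by positivity)]
    refine ENNReal.ofReal_le_ofReal ?_
    have hkey := mul_le_mul_of_nonneg_right
      (scale_ineq (ht0 n) (ht1 n) (by linarith : (0:ℝ) < 2 * m) hlam)
      (show (0:ℝ) ≤ Real.pi ^ 3 * r ^ 6 by positivity)
    calc (2 * m) ^ (-2 * lam) * (Real.pi ^ 3 * r ^ 6)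
        ≤ ((t n) ^ 11 * (2 * m)) ^ (-2 * lam) * (t n) ^ 12 * (Real.pi ^ 3 * r ^ 6) := hkey
      _ = ((t n) ^ 11 * (2 * m)) ^ (-2 * lam) * (Real.pi ^ 3 * r ^ 6 * (t n) ^ 12) := by ring
  -- contradiction
  have hsub : (⋃ n, S n) ⊆ U := Set.iUnion_subset fun n => hSU n
  have hfin : ∫⁻ p in ⋃ n, S n,
      ENNReal.ofReal (‖Fpoly d p‖ ^ (-2 * lam)) ∂volume < ⊤ :=
    (hInt.mono_set hsub).lintegral_lt_top
  rw [lintegral_iUnion hSmeas hdisj] at hfin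
  have hle : (∑' _ : ℕ, C)
      ≤ ∑' n, ∫⁻ p in S n, ENNReal.ofReal (‖Fpoly d p‖ ^ (-2 * lam)) ∂volume :=
    ENNReal.tsum_le_tsum hbound
  rw [ENNReal.tsum_const_eq_top_of_ne_zero hCne, top_le_iff] at hle
  rw [hle] at hfin
  exact lt_irrefl _ hfin

end Aux


/-- Non-integrability of `|f₂|^(-2λ)` near the origin for every `λ > 6/11`:
the log canonical threshold of the invariant divisor `{p₀₁₂₄ = 0}` is at most `6/11`.
Here `ℂ³` is identified with `ℂ × ℂ × ℂ` with coordinates `x = p.1`, `y = p.2.1`,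
`z = p.2.2`, carrying the (product) Lebesgue measure. -/
theorem stmt_8 (d : ℂ) (lam : ℝ) (hlam : 6 / 11 < lam)
    (U : Set (ℂ × ℂ × ℂ)) (hU : IsOpen U) (h0 : ((0 : ℂ), (0 : ℂ), (0 : ℂ)) ∈ U) :
    ¬ IntegrableOn
      (fun p : ℂ × ℂ × ℂ =>
        ‖(p.1 ^ 4 * p.2.1 ^ 3 + 2 * p.2.2 * p.1 ^ 2 * p.2.1 ^ 4
            + p.2.2 ^ 2 * p.2.1 ^ 5
            + (d - 1) * p.1 ^ 5 * p.2.1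
            + (2 * d ^ 2 + 4 * d - 2) * p.2.2 * p.1 ^ 3 * p.2.1 ^ 2
            + (2 * d ^ 2 + 3 * d - 1) * p.2.2 ^ 2 * p.1 * p.2.1 ^ 3
            + (d ^ 3 - d ^ 2 - d) * p.2.2 * p.1 ^ 4
            + (d ^ 4 + 4 * d ^ 3 + d ^ 2) * p.2.2 ^ 2 * p.1 ^ 2 * p.2.1
            + (d ^ 3 + d ^ 2 + d) * p.2.2 ^ 3 * p.2.1 ^ 2
            + (d ^ 5 + 3 * d ^ 4 + 3 * d ^ 3 + d ^ 2) * p.2.2 ^ 3 * p.1)‖ ^ (-2 * lam))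
      U volume := by
  exact main d lam hlam U hU h0
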